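/- Let T, T^δ : X → Y be bounded linear operators between Hilbert spaces, y ∈ ran(T), and y^δ ∈ Y satisfying ‖Tx† - T^δx†‖ ≤ Cδ and ‖y - y^δ‖ ≤ C'δ, where x† is the minimum-norm solution of Tx = y. If additionally ‖T - T^δ‖ ≤ Cδ in operator norm, then as δ → 0 with α = α(δ) → 0 and δ²/α(δ) → 0, the Tikhonov-regularized solutions x_α^δ = argmin_x ‖T^δx - y^δ‖² + α‖x‖² converge weakly to x† along a subsequence, and the limit of every weakly convergent subsequence is x†; hence x_α^δ → x† weakly, and in fact in norm. -/

import Mathlib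

open MeasureTheory Filter RealInnerProductSpace

/-- Gradient of a scalar field on `ℝ^d`. -/
noncomputable def grad {d : ℕ} (f : EuclideanSpace ℝ (Fin d) → ℝ)
    (x : EuclideanSpace ℝ (Fin d)) : EuclideanSpace ℝ (Fin d) := gradient f x

/-- Divergence of a vector field on `ℝ^d` (trace of the Fréchet derivative). -/
noncomputable def divg {d : ℕ} (V : EuclideanSpace ℝ (Fin d) → EuclideanSpace ℝ (Fin d))
    (x : EuclideanSpace ℝ (Fin d)) : ℝ :=
  LinearMap.trace ℝ _ (fderiv ℝ V x : EuclideanSpace ℝ (Fin d) →ₗ[ℝ] EuclideanSpace ℝ (Fin d))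

/-- Laplacian of a scalar field. -/
noncomputable def lap {d : ℕ} (f : EuclideanSpace ℝ (Fin d) → ℝ)
    (x : EuclideanSpace ℝ (Fin d)) : ℝ := divg (grad f) x

/-- `ℤ^d`-periodicity: functions on the torus `𝕋^d` are identified with periodic
functions on `ℝ^d`. -/
def IsPeriodic {d : ℕ} (f : EuclideanSpace ℝ (Fin d) → ℝ) : Prop :=
  ∀ (x : EuclideanSpace ℝ (Fin d)) (k : Fin d → ℤ),
    f (x + (EuclideanSpace.equiv (Fin d) ℝ).symm (fun i => (k i : ℝ))) = f x

/-- Fundamental domain of the torus `𝕋^d = ℝ^d / ℤ^d`. -/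
noncomputable def Box (d : ℕ) : Set (EuclideanSpace ℝ (Fin d)) :=
  {x | ∀ i, x i ∈ Set.Icc (0:ℝ) 1}

set_option maxHeartbeats 1000000 in
/-- convergence of Tikhonov-regularized equation-error solutions to the
minimum-norm solution `x†` as `δ → 0`, `α → 0`, `δ²/α → 0`; the convergence holds in
norm. -/
theorem tikhonov_convergence
    {X Y : Type*} [NormedAddCommGroup X] [InnerProductSpace ℝ X] [CompleteSpace X]
    [NormedAddCommGroup Y] [InnerProductSpace ℝ Y] [CompleteSpace Y]
    (T : X →L[ℝ] Y) (y : Y) (xdag : X) (C C' : ℝ) (hC : 0 ≤ C) (hC' : 0 ≤ C')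
    (hsol : T xdag = y) (hmin : ∀ x, T x = y → ‖xdag‖ ≤ ‖x‖)
    (δ α : ℕ → ℝ) (hδpos : ∀ n, 0 ≤ δ n) (hαpos : ∀ n, 0 < α n)
    (hδ0 : Tendsto δ atTop (nhds 0)) (hα0 : Tendsto α atTop (nhds 0))
    (hrate : Tendsto (fun n => δ n ^ 2 / α n) atTop (nhds 0))
    (Tn : ℕ → X →L[ℝ] Y) (yn : ℕ → Y)
    (hTT : ∀ n, ‖T xdag - Tn n xdag‖ ≤ C * δ n)
    (hop : ∀ n, ‖T - Tn n‖ ≤ C * δ n)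
    (hy : ∀ n, ‖y - yn n‖ ≤ C' * δ n)
    (xn : ℕ → X)
    (hxn : ∀ n x, ‖Tn n (xn n) - yn n‖ ^ 2 + α n * ‖xn n‖ ^ 2 ≤
      ‖Tn n x - yn n‖ ^ 2 + α n * ‖x‖ ^ 2) :
    Tendsto xn atTop (nhds xdag) := by
  classical
  set Td := ContinuousLinearMap.adjoint T with hTdDef
  set K := ‖xdag‖ with hK
  have hKnn : (0:ℝ) ≤ K := norm_nonneg _
  -- Step 1: xdag is orthogonal to ker T
  have hperp : ∀ z : X, T z = 0 → (⟪xdag, z⟫ : ℝ) = 0 := by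
    intro z hz
    rcases eq_or_ne z 0 with rfl | hz0
    · simp
    by_contra h
    have hnz : (0:ℝ) < ‖z‖ ^ 2 := pow_pos (norm_pos_iff.mpr hz0) 2
    set t : ℝ := ⟪xdag, z⟫ / ‖z‖ ^ 2 with ht
    have hx : T (xdag - t • z) = y := by
      rw [map_sub, ContinuousLinearMap.map_smul, hz, smul_zero, sub_zero, hsol]
    have hle := hmin _ hx
    have hsq : ‖xdag‖ ^ 2 ≤ ‖xdag - t • z‖ ^ 2 := pow_le_pow_left₀ (norm_nonneg _) hle 2
    have hcalc : ‖xdag - t • z‖ ^ 2 = ‖xdag‖ ^ 2 - ⟪xdag, z⟫ ^ 2 / ‖z‖ ^ 2 := by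
      rw [norm_sub_sq_real, real_inner_smul_right, norm_smul, Real.norm_eq_abs, mul_pow,
        sq_abs, ht]
      field_simp
      ring
    have hpos : 0 < (⟪xdag, z⟫ : ℝ) ^ 2 / ‖z‖ ^ 2 := div_pos (by positivity) hnz
    rw [hcalc] at hsq
    linarith
  -- Step 2: xdag is in the closure of the range of the adjoint
  have hclose : ∀ ε > (0:ℝ), ∃ w : Y, ‖xdag - Td w‖ < ε := by
    intro ε hε
    have hmem : xdag ∈ closure ((LinearMap.range (Td : Y →ₗ[ℝ] X) : Submodule ℝ X) : Set X) := by
      rw [← Submodule.topologicalClosure_coe, ← Submodule.orthogonal_orthogonal_eq_closure]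
      rw [SetLike.mem_coe, Submodule.mem_orthogonal]
      intro z hz
      have hTz : T z = 0 := by
        rw [Submodule.mem_orthogonal] at hz
        have h1 : (⟪T z, T z⟫ : ℝ) = 0 := by
          have h2 := hz (Td (T z)) ⟨T z, rfl⟩
          rwa [hTdDef, ContinuousLinearMap.adjoint_inner_left] at h2
        exact inner_self_eq_zero.mp h1
      rw [real_inner_comm]
      exact hperp z hTz
    rcases Metric.mem_closure_iff.mp hmem ε hε with ⟨b, hb, hdist⟩
    rcases hb with ⟨w, rfl⟩
    exact ⟨w, by rwa [dist_eq_norm] at hdist⟩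
  -- Step 3: basic bounds
  have he : ∀ n, ‖Tn n xdag - yn n‖ ≤ (C + C') * δ n := by
    intro n
    have h1 : Tn n xdag - yn n = -(T xdag - Tn n xdag) + (y - yn n) := by
      rw [hsol]; abel
    calc ‖Tn n xdag - yn n‖ = ‖-(T xdag - Tn n xdag) + (y - yn n)‖ := by rw [h1]
      _ ≤ ‖-(T xdag - Tn n xdag)‖ + ‖y - yn n‖ := norm_add_le _ _
      _ ≤ C * δ n + C' * δ n := by rw [norm_neg]; exact add_le_add (hTT n) (hy n)
      _ = (C + C') * δ n := by ring
  have hmain : ∀ n, ‖Tn n (xn n) - yn n‖ ^ 2 + α n * ‖xn n‖ ^ 2 ≤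
      ((C + C') * δ n) ^ 2 + α n * K ^ 2 := by
    intro n
    refine (hxn n xdag).trans (add_le_add ?_ le_rfl)
    exact pow_le_pow_left₀ (norm_nonneg _) (he n) 2
  set q : ℕ → ℝ := fun n => (C + C') ^ 2 * (δ n ^ 2 / α n) + K ^ 2 with hqdef
  have hqK : ∀ n, K ^ 2 ≤ q n := by
    intro n
    have h0 : 0 ≤ (C + C') ^ 2 * (δ n ^ 2 / α n) :=
      mul_nonneg (sq_nonneg _) (div_nonneg (sq_nonneg _) (hαpos n).le)
    simp only [hqdef]
    linarith
  have hxq : ∀ n, ‖xn n‖ ^ 2 ≤ q n := by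
    intro n
    have h1 : α n * ‖xn n‖ ^ 2 ≤ ((C + C') * δ n) ^ 2 + α n * K ^ 2 := by
      nlinarith [hmain n, sq_nonneg ‖Tn n (xn n) - yn n‖]
    have h2 : ‖xn n‖ ^ 2 - K ^ 2 ≤ ((C + C') * δ n) ^ 2 / α n := by
      rw [le_div_iff₀ (hαpos n)]
      nlinarith [h1]
    have h3 : ((C + C') * δ n) ^ 2 / α n = (C + C') ^ 2 * (δ n ^ 2 / α n) := by
      rw [mul_pow, mul_div_assoc]
    rw [h3] at h2
    simp only [hqdef]
    linarith
  have hqlim : Tendsto q atTop (nhds (K ^ 2)) := by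
    have h1 : Tendsto (fun n => (C + C') ^ 2 * (δ n ^ 2 / α n) + K ^ 2) atTop
        (nhds ((C + C') ^ 2 * 0 + K ^ 2)) := (hrate.const_mul _).add tendsto_const_nhds
    simpa [hqdef] using h1
  have hsqlim : Tendsto (fun n => Real.sqrt (q n)) atTop (nhds K) := by
    have h1 := (Real.continuous_sqrt.tendsto (K ^ 2)).comp hqlim
    simpa [Function.comp_def, Real.sqrt_sq hKnn] using h1
  have hxb : ∀ n, ‖xn n‖ ≤ Real.sqrt (q n) := fun n =>
    (Real.le_sqrt (norm_nonneg _) ((sq_nonneg K).trans (hqK n))).mpr (hxq n)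
  set s2 : ℕ → ℝ := fun n => ((C + C') * δ n) ^ 2 + α n * K ^ 2 with hs2def
  have hs2nn : ∀ n, 0 ≤ s2 n := fun n =>
    add_nonneg (sq_nonneg _) (mul_nonneg (hαpos n).le (sq_nonneg _))
  have hs2lim : Tendsto s2 atTop (nhds 0) := by
    have h1 : Tendsto (fun n => ((C + C') * δ n) ^ 2) atTop (nhds 0) := by
      have h := (hδ0.const_mul (C + C')).pow 2
      simpa using h
    have h2 : Tendsto (fun n => α n * K ^ 2) atTop (nhds 0) := by
      simpa using hα0.mul_const (K ^ 2)
    simpa [hs2def] using h1.add h2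
  have hsle : ∀ n, ‖Tn n (xn n) - yn n‖ ≤ Real.sqrt (s2 n) := by
    intro n
    apply (Real.le_sqrt (norm_nonneg _) (hs2nn n)).mpr
    have h := hmain n
    simp only [hs2def]
    nlinarith [mul_nonneg (hαpos n).le (sq_nonneg ‖xn n‖)]
  set R : ℕ → ℝ := fun n => C' * δ n + Real.sqrt (s2 n) + C * δ n * Real.sqrt (q n) with hRdef
  have hRlim : Tendsto R atTop (nhds 0) := by
    have h1 : Tendsto (fun n => C' * δ n) atTop (nhds 0) := by simpa using hδ0.const_mul C'
    have h2 : Tendsto (fun n => Real.sqrt (s2 n)) atTop (nhds 0) := by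
      have h := (Real.continuous_sqrt.tendsto 0).comp hs2lim
      simpa [Function.comp_def] using h
    have h3 : Tendsto (fun n => C * δ n * Real.sqrt (q n)) atTop (nhds (C * 0 * K)) :=
      (hδ0.const_mul C).mul hsqlim
    have h4 := (h1.add h2).add h3
    simpa [hRdef] using h4
  have hr : ∀ n, ‖y - T (xn n)‖ ≤ R n := by
    intro n
    have hdec : y - T (xn n) = ((y - yn n) - (Tn n (xn n) - yn n)) + (Tn n (xn n) - T (xn n)) := by
      abel
    have t1 : ‖(y - yn n) - (Tn n (xn n) - yn n)‖ ≤ C' * δ n + Real.sqrt (s2 n) :=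
      (norm_sub_le _ _).trans (add_le_add (hy n) (hsle n))
    have t2 : ‖Tn n (xn n) - T (xn n)‖ ≤ C * δ n * Real.sqrt (q n) := by
      have h1 : ‖Tn n (xn n) - T (xn n)‖ ≤ ‖Tn n - T‖ * ‖xn n‖ := by
        have h := (Tn n - T).le_opNorm (xn n)
        simpa [ContinuousLinearMap.sub_apply] using h
      have h2 : ‖Tn n - T‖ ≤ C * δ n := by rw [norm_sub_rev]; exact hop n
      calc ‖Tn n (xn n) - T (xn n)‖ ≤ ‖Tn n - T‖ * ‖xn n‖ := h1
        _ ≤ (C * δ n) * Real.sqrt (q n) :=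
            mul_le_mul h2 (hxb n) (norm_nonneg _) (mul_nonneg hC (hδpos n))
    calc ‖y - T (xn n)‖
        = ‖((y - yn n) - (Tn n (xn n) - yn n)) + (Tn n (xn n) - T (xn n))‖ := by rw [← hdec]
      _ ≤ ‖(y - yn n) - (Tn n (xn n) - yn n)‖ + ‖Tn n (xn n) - T (xn n)‖ := norm_add_le _ _
      _ ≤ R n := by simp only [hRdef]; linarith
  -- Step 4: key inequality
  have hkey : ∀ (w : Y) (n : ℕ), ‖xn n - xdag‖ ^ 2 ≤
      (q n - K ^ 2) + 2 * ((K + Real.sqrt (q n)) * ‖xdag - Td w‖) + 2 * (R n * ‖w‖) := by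
    intro w n
    have e1 : ‖xn n - xdag‖ ^ 2 = ‖xn n‖ ^ 2 - 2 * ⟪xn n, xdag⟫ + K ^ 2 := by
      rw [norm_sub_sq_real, hK]
    have e2 : (⟪xdag - xn n, xdag⟫ : ℝ)
        = ⟪xdag - xn n, xdag - Td w⟫ + ⟪xdag - xn n, Td w⟫ := by
      rw [← inner_add_right, sub_add_cancel]
    have e3 : (⟪xdag - xn n, Td w⟫ : ℝ) = ⟪y - T (xn n), w⟫ := by
      rw [hTdDef, ContinuousLinearMap.adjoint_inner_right, map_sub, hsol]
    have e4 : (⟪xdag - xn n, xdag⟫ : ℝ) = K ^ 2 - ⟪xn n, xdag⟫ := by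
      rw [inner_sub_left, real_inner_self_eq_norm_sq, hK]
    have b1 : (⟪xdag - xn n, xdag - Td w⟫ : ℝ) ≤ (K + Real.sqrt (q n)) * ‖xdag - Td w‖ := by
      refine (real_inner_le_norm _ _).trans ?_
      refine mul_le_mul_of_nonneg_right ?_ (norm_nonneg _)
      calc ‖xdag - xn n‖ ≤ ‖xdag‖ + ‖xn n‖ := norm_sub_le _ _
        _ ≤ K + Real.sqrt (q n) := add_le_add le_rfl (hxb n)
    have b2 : (⟪y - T (xn n), w⟫ : ℝ) ≤ R n * ‖w‖ :=
      (real_inner_le_norm _ _).trans (mul_le_mul_of_nonneg_right (hr n) (norm_nonneg _))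
    linarith [hxq n, e1, e2, e3, e4, b1, b2]
  -- Step 5: conclude
  have hsq0 : Tendsto (fun n => ‖xn n - xdag‖ ^ 2) atTop (nhds 0) := by
    rw [Metric.tendsto_atTop]
    intro ε hε
    have h4K : (0:ℝ) < 4 * K + 4 := by linarith
    set ε' : ℝ := ε / (4 * K + 4) with hε'
    have hε'pos : 0 < ε' := div_pos hε h4K
    obtain ⟨w, hw⟩ := hclose ε' hε'pos
    have hdw : 0 ≤ ‖xdag - Td w‖ := norm_nonneg _
    have hg : Tendsto
        (fun n => (q n - K ^ 2) + 2 * ((K + Real.sqrt (q n)) * ‖xdag - Td w‖) + 2 * (R n * ‖w‖))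
        atTop (nhds ((K ^ 2 - K ^ 2) + 2 * ((K + K) * ‖xdag - Td w‖) + 2 * (0 * ‖w‖))) :=
      ((hqlim.sub tendsto_const_nhds).add
        ((((tendsto_const_nhds.add hsqlim).mul_const _)).const_mul 2)).add
        ((hRlim.mul_const _).const_mul 2)
    have hlim_lt : (K ^ 2 - K ^ 2) + 2 * ((K + K) * ‖xdag - Td w‖) + 2 * (0 * ‖w‖) < ε := by
      have heq : (4 * K + 4) * ε' = ε := by
        rw [hε']; field_simp
      have h1 : (K + K) * ‖xdag - Td w‖ ≤ (K + K) * ε' :=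
        mul_le_mul_of_nonneg_left hw.le (by linarith)
      have h2 : 2 * ((K + K) * ε') + 4 * ε' = ε := by rw [← heq]; ring
      linarith
    have hev := hg.eventually_lt_const hlim_lt
    rcases eventually_atTop.mp hev with ⟨N, hN⟩
    refine ⟨N, fun n hn => ?_⟩
    rw [Real.dist_eq, sub_zero, abs_of_nonneg (sq_nonneg _)]
    exact lt_of_le_of_lt (hkey w n) (hN n hn)
  have hn0 : Tendsto (fun n => ‖xn n - xdag‖) atTop (nhds 0) := by
    have h1 := (Real.continuous_sqrt.tendsto 0).comp hsq0
    have h2 : (Real.sqrt ∘ fun n => ‖xn n - xdag‖ ^ 2) = fun n => ‖xn n - xdag‖ := by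
      funext n; exact Real.sqrt_sq (norm_nonneg _)
    rw [h2] at h1
    simpa using h1
  exact tendsto_iff_norm_sub_tendsto_zero.mpr hn0
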